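/- Let n ≥ 2, let α ∈ (0,1), let a ∈ ℝ, let w : {1,…,n} → ℝ be nonnegative weights with Σ_{i=1}^n w_i = 1, and let ψ : {1,…,n} → ℝ satisfy |ψ(r+1) − ψ(r)| ≤ C·r^{−α} for all integers 1 ≤ r ≤ n−1, where C ≥ 0. For each permutation π of {1,…,n} define q_π = σ(a + Σ_{i=1}^n w_i·ψ(π(i))), and let q̄ be the average of q_π over all n! permutations. Then E_π|q_π − q̄| ≤ (C/(4(1−α)))·n^{1−α}, where the expectation is the uniform average over all permutations. -/

import Mathlib

/-- The logistic (sigmoid) function `σ(t) = 1 / (1 + e^{-t})`. -/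
noncomputable def logistic (t : ℝ) : ℝ := 1 / (1 + Real.exp (-t))

lemma logistic_hasDerivAt (t : ℝ) :
    HasDerivAt logistic (Real.exp (-t) / (1 + Real.exp (-t)) ^ 2) t := by
  have h1 : HasDerivAt (fun t : ℝ => 1 + Real.exp (-t)) (-Real.exp (-t)) t := by
    simpa using ((Real.hasDerivAt_exp (-t)).comp t (hasDerivAt_neg t)).const_add 1
  have hne : (1 + Real.exp (-t)) ≠ 0 := by positivity
  have := h1.inv hne
  unfold logistic
  simp only [one_div]
  rw [show Real.exp (-t) / (1 + Real.exp (-t)) ^ 2 = - -Real.exp (-t) / (1 + Real.exp (-t)) ^ 2 by ring]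
  exact this

lemma logistic_lip (x y : ℝ) : |logistic x - logistic y| ≤ |x - y| / 4 := by
  have hlip : LipschitzWith (4⁻¹ : NNReal) logistic := by
    apply lipschitzWith_of_nnnorm_deriv_le
      (fun t => (logistic_hasDerivAt t).differentiableAt)
    intro t
    rw [(logistic_hasDerivAt t).deriv]
    rw [← NNReal.coe_le_coe]
    have he := Real.exp_pos (-t)
    have h4 : Real.exp (-t) / (1 + Real.exp (-t)) ^ 2 ≤ 4⁻¹ := by
      rw [div_le_iff₀ (by positivity)]
      nlinarith [sq_nonneg (1 - Real.exp (-t))]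
    calc (‖Real.exp (-t) / (1 + Real.exp (-t)) ^ 2‖₊ : ℝ)
        = |Real.exp (-t) / (1 + Real.exp (-t)) ^ 2| := by
          rw [coe_nnnorm, Real.norm_eq_abs]
      _ = Real.exp (-t) / (1 + Real.exp (-t)) ^ 2 := abs_of_pos (by positivity)
      _ ≤ 4⁻¹ := h4
      _ = ((4⁻¹ : NNReal) : ℝ) := by norm_num
  have := hlip.dist_le_mul x y
  rw [Real.dist_eq, Real.dist_eq] at this
  calc |logistic x - logistic y| ≤ (4⁻¹ : NNReal) * |x - y| := this
    _ = |x - y| / 4 := by push_cast; ring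

/-- Bernoulli step: `(1-α)·r^{-α} ≤ r^{1-α} - (r-1)^{1-α}` for `r ≥ 1`. -/
lemma step_bound {α : ℝ} (hα0 : 0 < α) (hα1 : α < 1) (k : ℕ) :
    (1 - α) * ((k + 1 : ℕ) : ℝ) ^ (-α) ≤
      ((k + 1 : ℕ) : ℝ) ^ (1 - α) - ((k : ℕ) : ℝ) ^ (1 - α) := by
  set r : ℝ := ((k + 1 : ℕ) : ℝ) with hr
  have hrpos : (0 : ℝ) < r := by positivity
  have hk : ((k : ℕ) : ℝ) = r - 1 := by push_cast [hr]; ring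
  have hr1 : (1:ℝ) ≤ r := by rw [hr]; exact_mod_cast Nat.le_add_left 1 k
  have hs : (-1 : ℝ) ≤ -1 / r := by
    rw [neg_div, neg_le_neg_iff]
    exact div_le_one_of_le₀ hr1 hrpos.le
  have hb := rpow_one_add_le_one_add_mul_self hs (by linarith : (0:ℝ) ≤ 1 - α)
    (by linarith : (1:ℝ) - α ≤ 1)
  have h1 : 1 + (-1 / r) = (r - 1) / r := by field_simp; ring
  rw [h1] at hb
  -- hb : ((r-1)/r) ^ (1-α) ≤ 1 + (1-α) * (-1/r)
  have hr1' : (0:ℝ) ≤ r - 1 := by linarith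
  have hdiv : ((r - 1) / r) ^ (1 - α) = (r - 1) ^ (1 - α) / r ^ (1 - α) :=
    Real.div_rpow hr1' hrpos.le _
  rw [hdiv, div_le_iff₀ (by positivity : (0:ℝ) < r ^ (1 - α))] at hb
  have hpow : r ^ (1 - α) * r⁻¹ = r ^ (-α) := by
    rw [show r⁻¹ = r ^ (-1 : ℝ) by rw [Real.rpow_neg_one], ← Real.rpow_add hrpos]
    congr 1; ring
  have h2 : (1 + (1 - α) * (-1 / r)) * r ^ (1 - α) = r ^ (1 - α) - (1 - α) * r ^ (-α) := by
    rw [← hpow]; field_simp; ring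
  rw [hk]
  linarith [hb, h2.symm.le]

lemma sum_rpow_le {α : ℝ} (hα0 : 0 < α) (hα1 : α < 1) (m : ℕ) :
    ∑ k ∈ Finset.range m, ((k + 1 : ℕ) : ℝ) ^ (-α) ≤ (m : ℝ) ^ (1 - α) / (1 - α) := by
  have h1α : (0:ℝ) < 1 - α := by linarith
  rw [le_div_iff₀ h1α, mul_comm]
  have tele : ∑ k ∈ Finset.range m,
      (((k + 1 : ℕ) : ℝ) ^ (1 - α) - ((k : ℕ) : ℝ) ^ (1 - α)) = (m : ℝ) ^ (1 - α) := by
    rw [Finset.sum_range_sub (fun k => ((k : ℕ) : ℝ) ^ (1 - α))]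
    simp [Real.zero_rpow (by intro h; linarith : (1:ℝ) - α ≠ 0)]
  calc (1 - α) * ∑ k ∈ Finset.range m, ((k + 1 : ℕ) : ℝ) ^ (-α)
      = ∑ k ∈ Finset.range m, (1 - α) * ((k + 1 : ℕ) : ℝ) ^ (-α) := by
        rw [Finset.mul_sum]
    _ ≤ ∑ k ∈ Finset.range m,
        (((k + 1 : ℕ) : ℝ) ^ (1 - α) - ((k : ℕ) : ℝ) ^ (1 - α)) :=
        Finset.sum_le_sum fun k _ => step_bound hα0 hα1 k
    _ = (m : ℝ) ^ (1 - α) := tele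

lemma osc_bound (n : ℕ) (α C : ℝ) (hα0 : 0 < α) (hα1 : α < 1) (hC : 0 ≤ C) (ψ : ℕ → ℝ)
    (hreg : ∀ r : ℕ, 1 ≤ r → r ≤ n - 1 → |ψ (r + 1) - ψ r| ≤ C * (r : ℝ) ^ (-α))
    (s t : ℕ) (hs : 1 ≤ s) (ht : t ≤ n) (hst : s ≤ t) :
    |ψ t - ψ s| ≤ C * (n : ℝ) ^ (1 - α) / (1 - α) := by
  have key : ∀ t, s ≤ t → t ≤ n → |ψ t - ψ s| ≤ ∑ r ∈ Finset.Ico s t, C * (r : ℝ) ^ (-α) := by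
    intro t
    induction t with
    | zero => intro h1 _; exact absurd h1 (by omega)
    | succ t ih =>
      intro h1 h2
      rcases Nat.lt_or_ge t s with h | h
      · have : s = t + 1 := by omega
        subst this; simp
      · have hb := hreg t (le_trans hs h) (by omega)
        have ihh := ih h (by omega)
        have hsplit : Finset.Ico s (t+1) = insert t (Finset.Ico s t) := by
          ext x; simp [Finset.mem_Ico]; omega
        rw [hsplit, Finset.sum_insert (by simp)]
        calc |ψ (t+1) - ψ s| ≤ |ψ (t+1) - ψ t| + |ψ t - ψ s| := abs_sub_le _ _ _
          _ ≤ C * (t : ℝ) ^ (-α) + ∑ r ∈ Finset.Ico s t, C * (r : ℝ) ^ (-α) :=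
            add_le_add hb ihh
  have h1 := key t hst ht
  have h2 : ∑ r ∈ Finset.Ico s t, C * (r : ℝ) ^ (-α)
      ≤ ∑ r ∈ Finset.Ico 1 n, C * (r : ℝ) ^ (-α) := by
    apply Finset.sum_le_sum_of_subset_of_nonneg
    · apply Finset.Ico_subset_Ico hs ht
    · intro r _ _
      positivity
  have h3 : ∑ r ∈ Finset.Ico 1 n, C * (r : ℝ) ^ (-α)
      ≤ C * (n : ℝ) ^ (1 - α) / (1 - α) := by
    rw [Finset.sum_Ico_eq_sum_range]
    have := sum_rpow_le hα0 hα1 (n - 1)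
    calc ∑ k ∈ Finset.range (n - 1), C * ((1 + k : ℕ) : ℝ) ^ (-α)
        = C * ∑ k ∈ Finset.range (n - 1), ((k + 1 : ℕ) : ℝ) ^ (-α) := by
          rw [Finset.mul_sum]; congr 1; ext k; rw [Nat.add_comm 1 k]
      _ ≤ C * (((n - 1 : ℕ) : ℝ) ^ (1 - α) / (1 - α)) :=
          mul_le_mul_of_nonneg_left this hC
      _ ≤ C * ((n : ℝ) ^ (1 - α) / (1 - α)) := by
          apply mul_le_mul_of_nonneg_left _ hC
          apply div_le_div_of_nonneg_right _ (by linarith)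
          exact Real.rpow_le_rpow (by positivity)
            (by exact_mod_cast Nat.sub_le n 1) (by linarith)
      _ = C * (n : ℝ) ^ (1 - α) / (1 - α) := by ring
  linarith

/-- The prediction under permutation `π`: `q_π = σ(a + ∑_i w_i·ψ(pos_π(i)))`, where the
position of chunk `i` in `{1,…,n}` is encoded as `(π i : ℕ) + 1`. -/
noncomputable def qperm (n : ℕ) (a : ℝ) (w : Fin n → ℝ) (ψ : ℕ → ℝ)
    (π : Equiv.Perm (Fin n)) : ℝ :=
  logistic (a + ∑ i : Fin n, w i * ψ ((π i : ℕ) + 1))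

/-- **Quantified Martingale Violation, subharmonic decay (α ∈ (0,1)).**
Under the first-order positional sensitivity model with `(α, C)`-regular potential `ψ`,
the permutation-induced dispersion satisfies `E_π|q_π − q̄| ≤ (C/(4(1−α)))·n^{1−α}`. -/
theorem qmv_subharmonic (n : ℕ) (hn : 2 ≤ n) (α : ℝ) (hα0 : 0 < α) (hα1 : α < 1)
    (a : ℝ) (C : ℝ) (hC : 0 ≤ C)
    (w : Fin n → ℝ) (hw0 : ∀ i, 0 ≤ w i) (hw1 : ∑ i, w i = 1) (ψ : ℕ → ℝ)
    (hreg : ∀ r : ℕ, 1 ≤ r → r ≤ n - 1 → |ψ (r + 1) - ψ r| ≤ C * (r : ℝ) ^ (-α)) :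
    (1 / (Nat.factorial n : ℝ)) *
        ∑ π : Equiv.Perm (Fin n),
          |qperm n a w ψ π -
            (1 / (Nat.factorial n : ℝ)) * ∑ π' : Equiv.Perm (Fin n), qperm n a w ψ π'| ≤
      (C / (4 * (1 - α))) * (n : ℝ) ^ (1 - α) := by
  have h1α : (0:ℝ) < 1 - α := by linarith
  set N : ℝ := (Nat.factorial n : ℝ) with hNdef
  have hN : (0:ℝ) < N := by rw [hNdef]; exact_mod_cast Nat.factorial_pos n
  set B : ℝ := C * (n : ℝ) ^ (1 - α) / (1 - α) with hBdef
  have hBpos : 0 ≤ B := by positivity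
  -- oscillation bound for positions in [1, n]
  have hosc : ∀ p q : ℕ, 1 ≤ p → p ≤ n → 1 ≤ q → q ≤ n → |ψ p - ψ q| ≤ B := by
    intro p q hp1 hpn hq1 hqn
    rcases le_total q p with h | h
    · exact osc_bound n α C hα0 hα1 hC ψ hreg q p hq1 hpn h
    · rw [abs_sub_comm]
      exact osc_bound n α C hα0 hα1 hC ψ hreg p q hp1 hqn h
  -- pairwise bound
  have hpair : ∀ π π' : Equiv.Perm (Fin n),
      |qperm n a w ψ π - qperm n a w ψ π'| ≤ B / 4 := by
    intro π π'
    unfold qperm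
    refine le_trans (logistic_lip _ _) ?_
    have harg : |(a + ∑ i : Fin n, w i * ψ ((π i : ℕ) + 1)) -
        (a + ∑ i : Fin n, w i * ψ ((π' i : ℕ) + 1))| ≤ B := by
      have hdiff : (a + ∑ i : Fin n, w i * ψ ((π i : ℕ) + 1)) -
          (a + ∑ i : Fin n, w i * ψ ((π' i : ℕ) + 1))
          = ∑ i : Fin n, w i * (ψ ((π i : ℕ) + 1) - ψ ((π' i : ℕ) + 1)) := by
        simp only [mul_sub, Finset.sum_sub_distrib]; ring
      rw [hdiff]
      calc |∑ i : Fin n, w i * (ψ ((π i : ℕ) + 1) - ψ ((π' i : ℕ) + 1))|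
          ≤ ∑ i : Fin n, |w i * (ψ ((π i : ℕ) + 1) - ψ ((π' i : ℕ) + 1))| :=
            Finset.abs_sum_le_sum_abs _ _
        _ ≤ ∑ i : Fin n, w i * B := by
            apply Finset.sum_le_sum
            intro i _
            rw [abs_mul, abs_of_nonneg (hw0 i)]
            apply mul_le_mul_of_nonneg_left _ (hw0 i)
            exact hosc _ _ (Nat.le_add_left 1 _) (Nat.succ_le_of_lt (π i).isLt)
              (Nat.le_add_left 1 _) (Nat.succ_le_of_lt (π' i).isLt)
        _ = B := by rw [← Finset.sum_mul, hw1, one_mul]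
    linarith [harg]
  -- per-permutation bound against the average
  have hq : ∀ π : Equiv.Perm (Fin n),
      |qperm n a w ψ π - (1 / N) * ∑ π' : Equiv.Perm (Fin n), qperm n a w ψ π'| ≤ B / 4 := by
    intro π
    have hcard : ((Finset.univ : Finset (Equiv.Perm (Fin n))).card : ℝ) = N := by
      rw [hNdef]
      norm_num [Finset.card_univ, Fintype.card_perm]
    have hrw : qperm n a w ψ π - (1 / N) * ∑ π' : Equiv.Perm (Fin n), qperm n a w ψ π'
        = (1 / N) * ∑ π' : Equiv.Perm (Fin n),
            (qperm n a w ψ π - qperm n a w ψ π') := by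
      rw [Finset.sum_sub_distrib, Finset.sum_const, nsmul_eq_mul, hcard]
      field_simp
    rw [hrw, abs_mul, abs_of_pos (by positivity : (0:ℝ) < 1 / N)]
    calc (1 / N) * |∑ π' : Equiv.Perm (Fin n), (qperm n a w ψ π - qperm n a w ψ π')|
        ≤ (1 / N) * ∑ π' : Equiv.Perm (Fin n), |qperm n a w ψ π - qperm n a w ψ π'| := by
          apply mul_le_mul_of_nonneg_left (Finset.abs_sum_le_sum_abs _ _) (by positivity)
      _ ≤ (1 / N) * ∑ _π' : Equiv.Perm (Fin n), (B / 4) := by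
          apply mul_le_mul_of_nonneg_left (Finset.sum_le_sum fun π' _ => hpair π π')
            (by positivity)
      _ = B / 4 := by
          rw [Finset.sum_const, nsmul_eq_mul, hcard]
          field_simp
  have hmain : (1 / N) *
      ∑ π : Equiv.Perm (Fin n),
        |qperm n a w ψ π - (1 / N) * ∑ π' : Equiv.Perm (Fin n), qperm n a w ψ π'|
      ≤ B / 4 := by
    have hcard : ((Finset.univ : Finset (Equiv.Perm (Fin n))).card : ℝ) = N := by
      rw [hNdef]
      norm_num [Finset.card_univ, Fintype.card_perm]
    calc (1 / N) * ∑ π : Equiv.Perm (Fin n),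
          |qperm n a w ψ π - (1 / N) * ∑ π' : Equiv.Perm (Fin n), qperm n a w ψ π'|
        ≤ (1 / N) * ∑ _π : Equiv.Perm (Fin n), (B / 4) := by
          apply mul_le_mul_of_nonneg_left (Finset.sum_le_sum fun π _ => hq π)
            (by positivity)
      _ = B / 4 := by
          rw [Finset.sum_const, nsmul_eq_mul, hcard]
          field_simp
  refine le_trans hmain ?_
  rw [hBdef]
  rw [show C * (n : ℝ) ^ (1 - α) / (1 - α) / 4 = (C / (4 * (1 - α))) * (n : ℝ) ^ (1 - α) by
    rw [div_mul_eq_mul_div, div_div]; ring_nf]
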